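/- Let K be a positive commutative monoid that is weakly cancellative and totally canonically pre-ordered. Let A, B, C be finite types and let R : A × C → K and S : B × C → K be inner consistent K-relations. Then there exists a witness T : A × B × C → K of their consistency (∑_{b∈B} T(a,b,c) = R(a,c) for all a,c and ∑_{a∈A} T(a,b,c) = S(b,c) for all b,c) whose support is sparse: the number of triples (a,b,c) with T(a,b,c) ≠ 0 is at most the number of pairs (a,c) with R(a,c) ≠ 0 plus the number of pairs (b,c) with S(b,c) ≠ 0. -/

import Mathlib

open Finset
open scoped Classical

section Aux

variable {K : Type*} [AddCommMonoid K]

private lemma aux_sum_zero (hpos : ∀ p q : K, p + q = 0 → p = 0 ∧ q = 0)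
    {ι : Type*} (s : Finset ι) (f : ι → K)
    (h : ∑ i ∈ s, f i = 0) : ∀ i ∈ s, f i = 0 := by
  intro i hi
  exact (hpos _ _ ((Finset.add_sum_erase s f hi).trans h)).1

/-- singleton case: R supported only at a₀ -/
private lemma singleton_caseR {A B : Type*} [Fintype A] [Fintype B]
    (R : A → K) (S : B → K) (a₀ : A) (hR : ∀ a, a ≠ a₀ → R a = 0)
    (hsum : ∑ a, R a = ∑ b, S b) :
    ∃ T : A → B → K, (∀ a, ∑ b, T a b = R a) ∧ (∀ b, ∑ a, T a b = S b) ∧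
      (univ.filter fun p : A × B => T p.1 p.2 ≠ 0).card
        ≤ (univ.filter fun b => S b ≠ 0).card := by
  refine ⟨fun a b => if a = a₀ then S b else 0, ?_, ?_, ?_⟩
  · intro a
    by_cases h : a = a₀
    · subst h
      simp only [if_pos rfl, if_true]
      rw [← hsum, Fintype.sum_eq_single a hR]
    · simp [h, hR a h]
  · intro b
    simp
  · apply Finset.card_le_card_of_injOn Prod.snd
    · intro p hp
      simp only [coe_filter, Set.mem_setOf_eq, coe_univ, Set.mem_univ, mem_filter, mem_univ, true_and] at hp ⊢
      intro h; apply hp; simp [h]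
    · intro p hp q hq h
      simp only [coe_filter, Set.mem_setOf_eq] at hp hq
      have hp1 : p.1 = a₀ := by by_contra h'; exact hp.2 (if_neg h')
      have hq1 : q.1 = a₀ := by by_contra h'; exact hq.2 (if_neg h')
      exact Prod.ext (hp1.trans hq1.symm) h

/-- singleton case: S supported only at b₀ -/
private lemma singleton_caseS {A B : Type*} [Fintype A] [Fintype B]
    (R : A → K) (S : B → K) (b₀ : B) (hS : ∀ b, b ≠ b₀ → S b = 0)
    (hsum : ∑ a, R a = ∑ b, S b) :
    ∃ T : A → B → K, (∀ a, ∑ b, T a b = R a) ∧ (∀ b, ∑ a, T a b = S b) ∧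
      (univ.filter fun p : A × B => T p.1 p.2 ≠ 0).card
        ≤ (univ.filter fun a => R a ≠ 0).card := by
  refine ⟨fun a b => if b = b₀ then R a else 0, ?_, ?_, ?_⟩
  · intro a
    simp
  · intro b
    by_cases h : b = b₀
    · subst h
      simp only [if_pos rfl, if_true]
      rw [hsum, Fintype.sum_eq_single b hS]
    · simp [h, hS b h]
  · apply Finset.card_le_card_of_injOn Prod.fst
    · intro p hp
      simp only [coe_filter, Set.mem_setOf_eq, coe_univ, Set.mem_univ, mem_filter, mem_univ, true_and] at hp ⊢
      intro h; apply hp; simp [h]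
    · intro p hp q hq h
      simp only [coe_filter, Set.mem_setOf_eq] at hp hq
      have hp1 : p.2 = b₀ := by by_contra h'; exact hp.2 (if_neg h')
      have hq1 : q.2 = b₀ := by by_contra h'; exact hq.2 (if_neg h')
      exact Prod.ext h (hp1.trans hq1.symm)

/-- trivial case: R everywhere zero -/
private lemma trivial_case (hpos : ∀ p q : K, p + q = 0 → p = 0 ∧ q = 0)
    {A B : Type*} [Fintype A] [Fintype B]
    (R : A → K) (S : B → K) (hR : ∀ a, R a = 0)
    (hsum : ∑ a, R a = ∑ b, S b) :
    ∃ T : A → B → K, (∀ a, ∑ b, T a b = R a) ∧ (∀ b, ∑ a, T a b = S b) ∧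
      (univ.filter fun p : A × B => T p.1 p.2 ≠ 0).card
        ≤ (univ.filter fun a => R a ≠ 0).card + (univ.filter fun b => S b ≠ 0).card := by
  have hS : ∀ b, S b = 0 := by
    have h0 : ∑ b, S b = 0 := by rw [← hsum]; simp [hR]
    exact fun b => aux_sum_zero hpos univ S h0 b (mem_univ b)
  exact ⟨fun _ _ => 0, fun a => by simp [hR a], fun b => by simp [hS b], by simp⟩

private lemma key (hpos : ∀ p q : K, p + q = 0 → p = 0 ∧ q = 0)
    (hwc : ∀ a b c : K, a + b = a + c → b = c ∨ b = 0 ∨ c = 0)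
    (htot : ∀ b c : K, (∃ a, b + a = c) ∨ (∃ a, c + a = b))
    {A B : Type*} [Fintype A] [Fintype B] :
    ∀ n : ℕ, ∀ (R : A → K) (S : B → K),
      (univ.filter fun a => R a ≠ 0).card + (univ.filter fun b => S b ≠ 0).card ≤ n →
      ∑ a, R a = ∑ b, S b →
      ∃ T : A → B → K, (∀ a, ∑ b, T a b = R a) ∧ (∀ b, ∑ a, T a b = S b) ∧
        (univ.filter fun p : A × B => T p.1 p.2 ≠ 0).card ≤
          (univ.filter fun a => R a ≠ 0).card + (univ.filter fun b => S b ≠ 0).card := by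
  intro n
  induction n with
  | zero =>
    intro R S hcard hsum
    have hR : ∀ a, R a = 0 := by
      intro a
      by_contra h
      have hm : a ∈ (univ.filter fun a => R a ≠ 0) := by simp [h]
      have := Finset.card_pos.mpr ⟨a, hm⟩
      omega
    exact trivial_case hpos R S hR hsum
  | succ n ih =>
    intro R S hcard hsum
    by_cases hR : ∀ a, R a = 0
    · exact trivial_case hpos R S hR hsum
    push_neg at hR
    obtain ⟨a₀, ha⟩ := hR
    have hS : ∃ b₀, S b₀ ≠ 0 := by
      by_contra hS
      push_neg at hS
      have h0 : ∑ a, R a = 0 := by rw [hsum]; simp [hS]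
      exact ha (aux_sum_zero hpos univ R h0 a₀ (mem_univ a₀))
    obtain ⟨b₀, hb⟩ := hS
    set rR := ∑ a ∈ univ.erase a₀, R a with hrR
    set rS := ∑ b ∈ univ.erase b₀, S b with hrS
    have hRsplit : R a₀ + rR = ∑ a, R a := Finset.add_sum_erase univ R (mem_univ a₀)
    have hSsplit : S b₀ + rS = ∑ b, S b := Finset.add_sum_erase univ S (mem_univ b₀)
    have hma : a₀ ∈ (univ.filter fun a => R a ≠ 0) := by simp [ha]
    have hmb : b₀ ∈ (univ.filter fun b => S b ≠ 0) := by simp [hb]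
    rcases htot (R a₀) (S b₀) with ⟨d, hd⟩ | ⟨d, hd⟩
    · -- R a₀ + d = S b₀
      have hkey : R a₀ + rR = R a₀ + (d + rS) := by
        rw [hRsplit, hsum, ← hSsplit, ← hd, add_assoc]
      rcases hwc _ _ _ hkey with heq | hR0 | hdS0
      · -- main case
        set R' : A → K := Function.update R a₀ 0 with hR'
        set S' : B → K := Function.update S b₀ d with hS'
        have hR'v : ∀ a, a ≠ a₀ → R' a = R a := fun a h => Function.update_of_ne h _ _
        have hS'v : ∀ b, b ≠ b₀ → S' b = S b := fun b h => Function.update_of_ne h _ _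
        have hR'a₀ : R' a₀ = 0 := Function.update_self _ _ _
        have hS'b₀ : S' b₀ = d := Function.update_self _ _ _
        have hsumR' : ∑ a, R' a = rR := by
          rw [← Finset.add_sum_erase univ R' (mem_univ a₀), hR'a₀, zero_add, hrR]
          exact Finset.sum_congr rfl fun a haa => hR'v a (Finset.ne_of_mem_erase haa)
        have hsumS' : ∑ b, S' b = d + rS := by
          rw [← Finset.add_sum_erase univ S' (mem_univ b₀), hS'b₀, hrS]
          congr 1
          exact Finset.sum_congr rfl fun b hbb => hS'v b (Finset.ne_of_mem_erase hbb)
        have hfR' : (univ.filter fun a => R' a ≠ 0)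
            = (univ.filter fun a => R a ≠ 0).erase a₀ := by
          ext a
          simp only [mem_filter, mem_univ, true_and, mem_erase]
          constructor
          · intro h
            have hne : a ≠ a₀ := by rintro rfl; exact h hR'a₀
            exact ⟨hne, (hR'v a hne) ▸ h⟩
          · rintro ⟨hne, h⟩; rwa [hR'v a hne]
        have hfS' : (univ.filter fun b => S' b ≠ 0) ⊆ (univ.filter fun b => S b ≠ 0) := by
          intro b hbb
          simp only [mem_filter, mem_univ, true_and] at hbb ⊢
          by_cases h : b = b₀
          · subst h; exact hb
          · rwa [hS'v b h] at hbb
        have hcardR' : (univ.filter fun a => R' a ≠ 0).card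
            = (univ.filter fun a => R a ≠ 0).card - 1 := by
          rw [hfR']; exact Finset.card_erase_of_mem hma
        have hposR : 1 ≤ (univ.filter fun a => R a ≠ 0).card := Finset.card_pos.mpr ⟨a₀, hma⟩
        have hcardS'le := Finset.card_le_card hfS'
        have hcard' : (univ.filter fun a => R' a ≠ 0).card
            + (univ.filter fun b => S' b ≠ 0).card ≤ n := by omega
        obtain ⟨T', hrow', hcol', hcT'⟩ := ih R' S' hcard' (by rw [hsumR', hsumS', heq])
        have hT'a₀ : ∀ b, T' a₀ b = 0 := by
          have h0 : ∑ b, T' a₀ b = 0 := by rw [hrow' a₀, hR'a₀]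
          exact fun b => aux_sum_zero hpos univ _ h0 b (mem_univ b)
        refine ⟨fun a b => if a = a₀ ∧ b = b₀ then R a₀ else T' a b, ?_, ?_, ?_⟩
        · intro a
          by_cases h : a = a₀
          · subst h
            have he : ∀ b : B, (if a = a ∧ b = b₀ then R a else T' a b)
                = if b = b₀ then R a else 0 := by
              intro b
              by_cases hbb : b = b₀ <;> simp [hbb, hT'a₀ b]
            rw [Finset.sum_congr rfl fun b _ => he b, Finset.sum_ite_eq']
            simp
          · have he : ∀ b : B, (if a = a₀ ∧ b = b₀ then R a₀ else T' a b) = T' a b := by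
              intro b; simp [h]
            rw [Finset.sum_congr rfl fun b _ => he b, hrow' a, hR'v a h]
        · intro b
          by_cases h : b = b₀
          · subst h
            have he : ∀ a : A, (if a = a₀ ∧ b = b then R a₀ else T' a b)
                = T' a b + if a = a₀ then R a₀ else 0 := by
              intro a
              by_cases haa : a = a₀ <;> simp [haa, hT'a₀ b]
            rw [Finset.sum_congr rfl fun a _ => he a, Finset.sum_add_distrib,
              Finset.sum_ite_eq', hcol' b, hS'b₀]
            simp only [mem_univ, if_pos]
            rw [← hd, add_comm]
          · have he : ∀ a : A, (if a = a₀ ∧ b = b₀ then R a₀ else T' a b) = T' a b := by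
              intro a; simp [h]
            rw [Finset.sum_congr rfl fun a _ => he a, hcol' b, hS'v b h]
        · have hsub : (univ.filter fun p : A × B =>
              (if p.1 = a₀ ∧ p.2 = b₀ then R a₀ else T' p.1 p.2) ≠ 0)
              ⊆ insert (a₀, b₀) (univ.filter fun p : A × B => T' p.1 p.2 ≠ 0) := by
            intro p hp
            simp only [mem_filter, mem_univ, true_and] at hp
            rw [Finset.mem_insert]
            by_cases h : p.1 = a₀ ∧ p.2 = b₀
            · left; exact Prod.ext h.1 h.2
            · right; simp only [mem_filter, mem_univ, true_and]
              rwa [if_neg h] at hp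
          calc (univ.filter fun p : A × B =>
                (if p.1 = a₀ ∧ p.2 = b₀ then R a₀ else T' p.1 p.2) ≠ 0).card
              ≤ (insert (a₀, b₀) (univ.filter fun p : A × B => T' p.1 p.2 ≠ 0)).card :=
                Finset.card_le_card hsub
            _ ≤ (univ.filter fun p : A × B => T' p.1 p.2 ≠ 0).card + 1 :=
                Finset.card_insert_le _ _
            _ ≤ _ := by omega
      · -- rR = 0 : R supported only at a₀
        have hRs : ∀ a, a ≠ a₀ → R a = 0 := fun a h =>
          aux_sum_zero hpos _ R hR0 a (Finset.mem_erase.mpr ⟨h, mem_univ a⟩)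
        obtain ⟨T, h1, h2, h3⟩ := singleton_caseR R S a₀ hRs hsum
        exact ⟨T, h1, h2, h3.trans (Nat.le_add_left _ _)⟩
      · -- d + rS = 0 : S supported only at b₀
        have hrS0 : rS = 0 := (hpos _ _ hdS0).2
        have hSs : ∀ b, b ≠ b₀ → S b = 0 := fun b h =>
          aux_sum_zero hpos _ S hrS0 b (Finset.mem_erase.mpr ⟨h, mem_univ b⟩)
        obtain ⟨T, h1, h2, h3⟩ := singleton_caseS R S b₀ hSs hsum
        exact ⟨T, h1, h2, h3.trans (Nat.le_add_right _ _)⟩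
    · -- S b₀ + d = R a₀ (mirror)
      have hkey : S b₀ + rS = S b₀ + (d + rR) := by
        rw [hSsplit, ← hsum, ← hRsplit, ← hd, add_assoc]
      rcases hwc _ _ _ hkey with heq | hS0 | hdR0
      · -- main case, mirror
        set S' : B → K := Function.update S b₀ 0 with hS'
        set R' : A → K := Function.update R a₀ d with hR'
        have hS'v : ∀ b, b ≠ b₀ → S' b = S b := fun b h => Function.update_of_ne h _ _
        have hR'v : ∀ a, a ≠ a₀ → R' a = R a := fun a h => Function.update_of_ne h _ _
        have hS'b₀ : S' b₀ = 0 := Function.update_self _ _ _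
        have hR'a₀ : R' a₀ = d := Function.update_self _ _ _
        have hsumS' : ∑ b, S' b = rS := by
          rw [← Finset.add_sum_erase univ S' (mem_univ b₀), hS'b₀, zero_add, hrS]
          exact Finset.sum_congr rfl fun b hbb => hS'v b (Finset.ne_of_mem_erase hbb)
        have hsumR' : ∑ a, R' a = d + rR := by
          rw [← Finset.add_sum_erase univ R' (mem_univ a₀), hR'a₀, hrR]
          congr 1
          exact Finset.sum_congr rfl fun a haa => hR'v a (Finset.ne_of_mem_erase haa)
        have hfS' : (univ.filter fun b => S' b ≠ 0)
            = (univ.filter fun b => S b ≠ 0).erase b₀ := by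
          ext b
          simp only [mem_filter, mem_univ, true_and, mem_erase]
          constructor
          · intro h
            have hne : b ≠ b₀ := by rintro rfl; exact h hS'b₀
            exact ⟨hne, (hS'v b hne) ▸ h⟩
          · rintro ⟨hne, h⟩; rwa [hS'v b hne]
        have hfR' : (univ.filter fun a => R' a ≠ 0) ⊆ (univ.filter fun a => R a ≠ 0) := by
          intro a haa
          simp only [mem_filter, mem_univ, true_and] at haa ⊢
          by_cases h : a = a₀
          · subst h; exact ha
          · rwa [hR'v a h] at haa
        have hcardS' : (univ.filter fun b => S' b ≠ 0).card
            = (univ.filter fun b => S b ≠ 0).card - 1 := by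
          rw [hfS']; exact Finset.card_erase_of_mem hmb
        have hposS : 1 ≤ (univ.filter fun b => S b ≠ 0).card := Finset.card_pos.mpr ⟨b₀, hmb⟩
        have hcardR'le := Finset.card_le_card hfR'
        have hcard' : (univ.filter fun a => R' a ≠ 0).card
            + (univ.filter fun b => S' b ≠ 0).card ≤ n := by omega
        obtain ⟨T', hrow', hcol', hcT'⟩ := ih R' S' hcard'
          (by rw [hsumR', hsumS', heq])
        have hT'b₀ : ∀ a, T' a b₀ = 0 := by
          have h0 : ∑ a, T' a b₀ = 0 := by rw [hcol' b₀, hS'b₀]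
          exact fun a => aux_sum_zero hpos univ _ h0 a (mem_univ a)
        refine ⟨fun a b => if a = a₀ ∧ b = b₀ then S b₀ else T' a b, ?_, ?_, ?_⟩
        · intro a
          by_cases h : a = a₀
          · subst h
            have he : ∀ b : B, (if a = a ∧ b = b₀ then S b₀ else T' a b)
                = T' a b + if b = b₀ then S b₀ else 0 := by
              intro b
              by_cases hbb : b = b₀ <;> simp [hbb, hT'b₀ a]
            rw [Finset.sum_congr rfl fun b _ => he b, Finset.sum_add_distrib,
              Finset.sum_ite_eq', hrow' a, hR'a₀]
            simp only [mem_univ, if_pos]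
            rw [← hd, add_comm]
          · have he : ∀ b : B, (if a = a₀ ∧ b = b₀ then S b₀ else T' a b) = T' a b := by
              intro b; simp [h]
            rw [Finset.sum_congr rfl fun b _ => he b, hrow' a, hR'v a h]
        · intro b
          by_cases h : b = b₀
          · subst h
            have he : ∀ a : A, (if a = a₀ ∧ b = b then S b else T' a b)
                = if a = a₀ then S b else 0 := by
              intro a
              by_cases haa : a = a₀ <;> simp [haa, hT'b₀ a]
            rw [Finset.sum_congr rfl fun a _ => he a, Finset.sum_ite_eq']
            simp
          · have he : ∀ a : A, (if a = a₀ ∧ b = b₀ then S b₀ else T' a b) = T' a b := by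
              intro a; simp [h]
            rw [Finset.sum_congr rfl fun a _ => he a, hcol' b, hS'v b h]
        · have hsub : (univ.filter fun p : A × B =>
              (if p.1 = a₀ ∧ p.2 = b₀ then S b₀ else T' p.1 p.2) ≠ 0)
              ⊆ insert (a₀, b₀) (univ.filter fun p : A × B => T' p.1 p.2 ≠ 0) := by
            intro p hp
            simp only [mem_filter, mem_univ, true_and] at hp
            rw [Finset.mem_insert]
            by_cases h : p.1 = a₀ ∧ p.2 = b₀
            · left; exact Prod.ext h.1 h.2
            · right; simp only [mem_filter, mem_univ, true_and]
              rwa [if_neg h] at hp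
          calc (univ.filter fun p : A × B =>
                (if p.1 = a₀ ∧ p.2 = b₀ then S b₀ else T' p.1 p.2) ≠ 0).card
              ≤ (insert (a₀, b₀) (univ.filter fun p : A × B => T' p.1 p.2 ≠ 0)).card :=
                Finset.card_le_card hsub
            _ ≤ (univ.filter fun p : A × B => T' p.1 p.2 ≠ 0).card + 1 :=
                Finset.card_insert_le _ _
            _ ≤ _ := by omega
      · -- rS = 0 : S supported only at b₀
        have hSs : ∀ b, b ≠ b₀ → S b = 0 := fun b h =>
          aux_sum_zero hpos _ S hS0 b (Finset.mem_erase.mpr ⟨h, mem_univ b⟩)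
        obtain ⟨T, h1, h2, h3⟩ := singleton_caseS R S b₀ hSs hsum
        exact ⟨T, h1, h2, h3.trans (Nat.le_add_right _ _)⟩
      · -- d + rR = 0 : R supported only at a₀
        have hrR0 : rR = 0 := (hpos _ _ hdR0).2
        have hRs : ∀ a, a ≠ a₀ → R a = 0 := fun a h =>
          aux_sum_zero hpos _ R hrR0 a (Finset.mem_erase.mpr ⟨h, mem_univ a⟩)
        obtain ⟨T, h1, h2, h3⟩ := singleton_caseR R S a₀ hRs hsum
        exact ⟨T, h1, h2, h3.trans (Nat.le_add_left _ _)⟩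

private lemma ncard_eq {α : Type*} [Fintype α] (p : α → Prop) [DecidablePred p] :
    {x | p x}.ncard = (univ.filter p).card := by
  rw [← Set.ncard_coe_finset]
  congr 1
  ext x
  simp

end Aux

/-- over a positive, weakly cancellative, totally canonically
pre-ordered commutative monoid, any two inner consistent `K`-relations have a
sparse witness of consistency. -/
theorem sparse_witness (K : Type*) [AddCommMonoid K]
    (hpos : ∀ p q : K, p + q = 0 → p = 0 ∧ q = 0)
    (hwc : ∀ a b c : K, a + b = a + c → b = c ∨ b = 0 ∨ c = 0)
    (htot : ∀ b c : K, (∃ a, b + a = c) ∨ (∃ a, c + a = b))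
    (A B C : Type*) [Fintype A] [Fintype B] [Fintype C]
    (R : A × C → K) (S : B × C → K)
    (hinner : ∀ c : C, ∑ a : A, R (a, c) = ∑ b : B, S (b, c)) :
    ∃ T : A × B × C → K,
      (∀ (a : A) (c : C), ∑ b : B, T (a, b, c) = R (a, c)) ∧
      (∀ (b : B) (c : C), ∑ a : A, T (a, b, c) = S (b, c)) ∧
      {x : A × B × C | T x ≠ 0}.ncard ≤
        {x : A × C | R x ≠ 0}.ncard + {x : B × C | S x ≠ 0}.ncard := by
  have hc : ∀ c : C, ∃ Tc : A → B → K,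
      (∀ a, ∑ b, Tc a b = R (a, c)) ∧ (∀ b, ∑ a, Tc a b = S (b, c)) ∧
      (univ.filter fun p : A × B => Tc p.1 p.2 ≠ 0).card ≤
        (univ.filter fun a => R (a, c) ≠ 0).card +
        (univ.filter fun b => S (b, c) ≠ 0).card := by
    intro c
    exact key hpos hwc htot _ (fun a => R (a, c)) (fun b => S (b, c))
      le_rfl (hinner c)
  choose Tc h1 h2 h3 using hc
  refine ⟨fun x => Tc x.2.2 x.1 x.2.1, fun a c => h1 c a, fun b c => h2 c b, ?_⟩
  rw [ncard_eq, ncard_eq, ncard_eq]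
  have e1 : (univ.filter fun x : A × B × C => Tc x.2.2 x.1 x.2.1 ≠ 0).card
      = ∑ c, (univ.filter fun p : A × B => Tc c p.1 p.2 ≠ 0).card := by
    simp only [Finset.card_filter, Fintype.sum_prod_type]
    refine Eq.trans (Finset.sum_congr rfl fun a _ => Finset.sum_comm) ?_
    exact Finset.sum_comm
  have e2 : (univ.filter fun x : A × C => R x ≠ 0).card
      = ∑ c, (univ.filter fun a => R (a, c) ≠ 0).card := by
    simp only [Finset.card_filter, Fintype.sum_prod_type]
    rw [Finset.sum_comm]
  have e3 : (univ.filter fun x : B × C => S x ≠ 0).card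
      = ∑ c, (univ.filter fun b => S (b, c) ≠ 0).card := by
    simp only [Finset.card_filter, Fintype.sum_prod_type]
    rw [Finset.sum_comm]
  rw [e1, e2, e3, ← Finset.sum_add_distrib]
  exact Finset.sum_le_sum fun c _ => h3 c
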